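/- Let X be a real vector space, M ⊆ X a nonempty affine subspace with M ≠ X, and S a generalized semispace generated by M. Define the relation ⪯_S on X by x ⪯_S y ⟺ y − x ∈ 0⁺S, where 0⁺S := {y ∈ X : x + ty ∈ S for all x ∈ S and all t > 0} is the recession cone of S. Then ⪯_S is a compatible total preorder on X; y ≺_S x (i.e. y ⪯_S x but not x ⪯_S y) for every x ∈ S and every y ∈ X \ S; for every a ∈ M one has M ∪ S = a + 0⁺S; and M = Min(M ∪ S | ⪯_S) := {x ∈ M ∪ S : x ⪯_S y for all y ∈ M ∪ S}. -/

import Mathlib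

/-- `S` is a generalized semispace generated by the set `M`: a convex set disjoint from `M`
that is maximal with respect to inclusion among convex subsets disjoint from `M`. -/
def IsGenSemispace {X : Type*} [AddCommGroup X] [Module ℝ X] (M S : Set X) : Prop :=
  Convex ℝ S ∧ S ∩ M = ∅ ∧
    ∀ C : Set X, Convex ℝ C → C ∩ M = ∅ → S ⊆ C → C = S

/-- `r` is a total preorder on `X` compatible with the vector space operations:
reflexive, transitive, total, translation invariant and invariant under
multiplication by positive scalars. -/
def IsCompatTotalPreorder {X : Type*} [AddCommGroup X] [Module ℝ X]
    (r : X → X → Prop) : Prop :=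
  (∀ x, r x x) ∧ (∀ x y z, r x y → r y z → r x z) ∧
    (∀ x y, r x y ∨ r y x) ∧
    (∀ x y z, r x y → r (x + z) (y + z)) ∧
    (∀ (x y : X) (l : ℝ), 0 < l → r x y → r (l • x) (l • y))

theorem genSemispace_preorder {X : Type*} [AddCommGroup X] [Module ℝ X]
    (M : AffineSubspace ℝ X) (hM : (M : Set X).Nonempty) (hMX : (M : Set X) ≠ Set.univ)
    (S : Set X) (hS : IsGenSemispace (M : Set X) S)
    -- `C` is the recession cone `0⁺S` of `S`
    (C : Set X) (hC : C = {y : X | ∀ x ∈ S, ∀ t : ℝ, 0 < t → x + t • y ∈ S})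
    (r : X → X → Prop) (hr : ∀ x y, r x y ↔ y - x ∈ C) :
    IsCompatTotalPreorder r ∧
      (∀ x ∈ S, ∀ y ∉ S, r y x ∧ ¬ r x y) ∧
      (∀ a ∈ (M : Set X), (M : Set X) ∪ S = {z : X | ∃ w ∈ C, z = a + w}) ∧
      (M : Set X) = {x ∈ (M : Set X) ∪ S | ∀ y ∈ (M : Set X) ∪ S, r x y} := by
  obtain ⟨hconv, hdisj, hmax⟩ := hS
  have hCmem : ∀ w : X, w ∈ C ↔ ∀ x ∈ S, ∀ t : ℝ, 0 < t → x + t • w ∈ S := by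
    subst hC; intro w; exact Iff.rfl
  have hdisj' : ∀ x, x ∈ S → x ∈ (M : Set X) → False := fun x hx hxM => by
    have hx' : x ∈ S ∩ (M : Set X) := ⟨hx, hxM⟩
    rw [hdisj] at hx'; exact hx'
  have hMmem : ∀ c : ℝ, ∀ p1 ∈ (M : Set X), ∀ p2 ∈ (M : Set X), ∀ p3 ∈ (M : Set X),
      c • (p1 - p2) + p3 ∈ (M : Set X) := by
    intro c p1 h1 p2 h2 p3 h3
    have := M.smul_vsub_vadd_mem c h1 h2 h3
    simpa using this
  have hSne : S.Nonempty := by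
    rcases Set.eq_empty_or_nonempty S with hSe | h
    · obtain ⟨x, hx⟩ : ∃ x, x ∉ (M : Set X) := by
        by_contra hcon; push_neg at hcon
        exact hMX (Set.eq_univ_of_forall hcon)
      have h1 : ({x} : Set X) ∩ (M : Set X) = ∅ := by
        apply Set.eq_empty_iff_forall_notMem.2
        rintro y ⟨hy1, hy2⟩
        rw [Set.mem_singleton_iff] at hy1
        subst hy1; exact hx hy2
      have h2 := hmax {x} (convex_singleton x) h1 (by rw [hSe]; exact Set.empty_subset _)
      rw [hSe] at h2
      exact absurd h2 (Set.singleton_ne_empty x)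
    · exact h
  have hL2 : ∀ z, z ∉ S → z ∉ (M : Set X) →
      ∃ s' ∈ S, ∃ m' ∈ (M : Set X), ∃ l : ℝ, 0 < l ∧ z + l • s' = (1 + l) • m' := by
    intro z hzS hzM
    have hmeet : (convexHull ℝ (insert z S) ∩ (M : Set X)).Nonempty := by
      rw [Set.nonempty_iff_ne_empty]
      intro hemp
      have h2 := hmax _ (convex_convexHull ℝ _) hemp
        ((Set.subset_insert z S).trans (subset_convexHull ℝ _))
      exact hzS (h2 ▸ subset_convexHull ℝ _ (Set.mem_insert z S))
    obtain ⟨p, hpH, hpM⟩ := hmeet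
    rw [convexHull_insert hSne, hconv.convexHull_eq, mem_convexJoin] at hpH
    obtain ⟨z', hz', s', hs', hseg⟩ := hpH
    rw [Set.mem_singleton_iff] at hz'
    obtain ⟨u, v, hu, hv, huv, hp⟩ := hseg
    rw [hz'] at hp
    have hu0 : 0 < u := by
      rcases hu.lt_or_eq with h | h
      · exact h
      · exfalso
        have hv1 : v = 1 := by linarith
        have : p = s' := by rw [← hp, ← h, hv1]; simp
        exact hdisj' s' hs' (this ▸ hpM)
    have hv0 : 0 < v := by
      rcases hv.lt_or_eq with h | h
      · exact h
      · exfalso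
        have hu1 : u = 1 := by linarith
        have : p = z := by rw [← hp, ← h, hu1]; simp
        exact hzM (this ▸ hpM)
    refine ⟨s', hs', p, hpM, v / u, by positivity, ?_⟩
    rw [← hp]
    match_scalars <;> field_simp <;> linarith
  have hKey : ∀ m ∈ (M : Set X), ∀ x, (x ∈ S ∨ x ∈ (M : Set X)) → x - m ∈ C := by
    intro m hm x hx
    rw [hCmem]
    intro s hs t ht
    by_contra hzS
    have h1t : (0:ℝ) < 1 + t := by linarith
    by_cases hzM : s + t • (x - m) ∈ (M : Set X)
    · rcases hx with hxS | hxM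
      · have hp1 : (1/(1+t)) • s + (t/(1+t)) • x ∈ S :=
          hconv hs hxS (by positivity) (by positivity) (by field_simp)
        have hp2 : (t/(1+t)) • (m - (s + t • (x - m))) + (s + t • (x - m)) ∈ (M : Set X) :=
          hMmem _ _ hm _ hzM _ hzM
        have heq : (1/(1+t)) • s + (t/(1+t)) • x
            = (t/(1+t)) • (m - (s + t • (x - m))) + (s + t • (x - m)) := by
          match_scalars <;> field_simp <;> try ring
        exact hdisj' _ hp1 (heq ▸ hp2)
      · have hp2 : t • (m - x) + (s + t • (x - m)) ∈ (M : Set X) :=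
          hMmem _ _ hm _ hxM _ hzM
        have heq : t • (m - x) + (s + t • (x - m)) = s := by module
        exact hdisj' s hs (heq ▸ hp2)
    · obtain ⟨s', hs', m', hm', l, hl, hzeq⟩ := hL2 _ hzS hzM
      have h1l : (0:ℝ) < 1 + l := by linarith
      have hm'eq : m' = (1/(1+l)) • (s + t • (x - m) + l • s') := by
        rw [hzeq]; match_scalars; field_simp
      rcases hx with hxS | hxM
      · have hq : (1/(1+t)) • s + (t/(1+t)) • x ∈ S :=
          hconv hs hxS (by positivity) (by positivity) (by field_simp)
        have hD : (0:ℝ) < 1 + t + l := by linarith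
        have hp1 : ((1+t)/(1+t+l)) • ((1/(1+t)) • s + (t/(1+t)) • x) + (l/(1+t+l)) • s' ∈ S :=
          hconv hq hs' (by positivity) (by positivity) (by field_simp)
        have hp2 : (t/(1+t+l)) • (m - m') + m' ∈ (M : Set X) := hMmem _ _ hm _ hm' _ hm'
        have heq : ((1+t)/(1+t+l)) • ((1/(1+t)) • s + (t/(1+t)) • x) + (l/(1+t+l)) • s'
            = (t/(1+t+l)) • (m - m') + m' := by
          rw [hm'eq]; match_scalars <;> field_simp <;> try ring
        exact hdisj' _ hp1 (heq ▸ hp2)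
      · have hp1 : (1/(1+l)) • s + (l/(1+l)) • s' ∈ S :=
          hconv hs hs' (by positivity) (by positivity) (by field_simp)
        have hp2 : (t/(1+l)) • (m - x) + m' ∈ (M : Set X) := hMmem _ _ hm _ hxM _ hm'
        have heq : (1/(1+l)) • s + (l/(1+l)) • s' = (t/(1+l)) • (m - x) + m' := by
          rw [hm'eq]; match_scalars <;> field_simp <;> try ring
        exact hdisj' _ hp1 (heq ▸ hp2)
  have h0C : (0:X) ∈ C := by
    rw [hCmem]; intro x hx t ht; simpa using hx
  have hsmulC : ∀ (l : ℝ), 0 < l → ∀ w ∈ C, l • w ∈ C := by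
    intro l hl w hw
    rw [hCmem] at hw ⊢
    intro x hx t ht
    have h1 := hw x hx (t*l) (by positivity)
    have heq : x + (t*l) • w = x + t • (l • w) := by
      rw [smul_smul]
    rwa [heq] at h1
  have haddC : ∀ w1 ∈ C, ∀ w2 ∈ C, w1 + w2 ∈ C := by
    intro w1 h1 w2 h2
    rw [hCmem] at h1 h2 ⊢
    intro x hx t ht
    have h3 := h2 (x + t • w1) (h1 x hx t ht) t ht
    have heq : x + t • w1 + t • w2 = x + t • (w1 + w2) := by module
    rwa [heq] at h3
  have hTot : ∀ u : X, u ∈ C ∨ -u ∈ C := by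
    intro u
    by_cases hu : u ∈ C
    · exact Or.inl hu
    · right
      rw [hCmem] at hu
      push_neg at hu
      obtain ⟨x, hx, t, ht, hzS⟩ := hu
      by_cases hzM : x + t • u ∈ (M : Set X)
      · have h1 : x - (x + t • u) ∈ C := hKey _ hzM x (Or.inl hx)
        have h2 := hsmulC (1/t) (by positivity) _ h1
        have heq : (1/t) • (x - (x + t • u)) = -u := by
          match_scalars <;> field_simp <;> ring
        rwa [heq] at h2
      · obtain ⟨s', hs', m', hm', l, hl, hzeq⟩ := hL2 _ hzS hzM
        have h1l : (0:ℝ) < 1 + l := by linarith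
        have hp : (1/(1+l)) • x + (l/(1+l)) • s' ∈ S :=
          hconv hx hs' (by positivity) (by positivity) (by field_simp)
        have h1 : (1/(1+l)) • x + (l/(1+l)) • s' - m' ∈ C := hKey m' hm' _ (Or.inl hp)
        have h2 := hsmulC ((1+l)/t) (by positivity) _ h1
        have hm'eq : m' = (1/(1+l)) • (x + t • u + l • s') := by
          rw [hzeq]; match_scalars; field_simp
        have heq : ((1+l)/t) • ((1/(1+l)) • x + (l/(1+l)) • s' - m') = -u := by
          rw [hm'eq]; match_scalars <;> field_simp <;> try ring
        rwa [heq] at h2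
  have hPart2 : ∀ x ∈ S, ∀ y ∉ S, x - y ∈ C ∧ ¬ (y - x ∈ C) := by
    intro x hx y hy
    constructor
    · by_cases hyM : y ∈ (M : Set X)
      · exact hKey y hyM x (Or.inl hx)
      · obtain ⟨s', hs', m', hm', l, hl, hzeq⟩ := hL2 y hy hyM
        have h1l : (0:ℝ) < 1 + l := by linarith
        have hq : (1/(1+l)) • x + (l/(1+l)) • s' ∈ S :=
          hconv hx hs' (by positivity) (by positivity) (by field_simp)
        have h1 := hsmulC (1+l) h1l _ (hKey m' hm' _ (Or.inl hq))
        have hyeq : y = (1+l) • m' - l • s' := eq_sub_iff_add_eq.mpr hzeq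
        have heq : (1+l) • ((1/(1+l)) • x + (l/(1+l)) • s' - m') = x - y := by
          rw [hyeq]; match_scalars <;> field_simp <;> try ring
        rwa [heq] at h1
    · intro hcon
      rw [hCmem] at hcon
      have h1 := hcon x hx 1 one_pos
      have heq : x + (1:ℝ) • (y - x) = y := by module
      exact hy (heq ▸ h1)
  have hPart3 : ∀ a ∈ (M : Set X), (M : Set X) ∪ S = {z : X | ∃ w ∈ C, z = a + w} := by
    intro a ha
    ext z
    simp only [Set.mem_union, Set.mem_setOf_eq]
    constructor
    · intro hz
      exact ⟨z - a, hKey a ha z hz.symm, by module⟩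
    · rintro ⟨w, hw, rfl⟩
      by_contra hcon
      push_neg at hcon
      obtain ⟨hzM, hzS⟩ := hcon
      obtain ⟨s', hs', m', hm', l, hl, hzeq⟩ := hL2 _ hzS hzM
      rw [hCmem] at hw
      have h1 := hw s' hs' (1/l) (by positivity)
      have hzeq' : a + w = (1+l) • m' - l • s' := eq_sub_iff_add_eq.mpr hzeq
      have hweq : w = (1+l) • m' - l • s' - a := by rw [← hzeq']; module
      have hp2 : (1/l) • (m' - a) + m' ∈ (M : Set X) := hMmem _ _ hm' _ ha _ hm'
      have heq : s' + (1/l) • w = (1/l) • (m' - a) + m' := by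
        rw [hweq]; match_scalars <;> field_simp <;> try ring
      exact hdisj' _ (heq ▸ h1) hp2
  have hPart4 : (M : Set X) = {x ∈ (M : Set X) ∪ S | ∀ y ∈ (M : Set X) ∪ S, r x y} := by
    ext x
    simp only [Set.mem_setOf_eq, Set.mem_union]
    constructor
    · intro hx
      exact ⟨Or.inl hx, fun y hy => (hr x y).mpr (hKey x hx y hy.symm)⟩
    · rintro ⟨hx, hmin⟩
      rcases hx with hxM | hxS
      · exact hxM
      · exfalso
        obtain ⟨a, ha⟩ := hM
        have h1 := (hr x a).mp (hmin a (Or.inl ha))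
        rw [hCmem] at h1
        have h2 := h1 x hxS 1 one_pos
        have heq : x + (1:ℝ) • (a - x) = a := by module
        exact hdisj' a (heq ▸ h2) ha
  refine ⟨⟨?_, ?_, ?_, ?_, ?_⟩,
    fun x hx y hy => ⟨(hr y x).mpr (hPart2 x hx y hy).1,
      fun h => (hPart2 x hx y hy).2 ((hr x y).mp h)⟩, hPart3, hPart4⟩
  · intro x
    rw [hr]
    simpa using h0C
  · intro x y z hxy hyz
    apply (hr x z).mpr
    have heq : (y - x) + (z - y) = z - x := by module
    exact heq ▸ haddC _ ((hr x y).mp hxy) _ ((hr y z).mp hyz)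
  · intro x y
    rcases hTot (y - x) with h | h
    · exact Or.inl ((hr x y).mpr h)
    · refine Or.inr ((hr y x).mpr ?_)
      rwa [neg_sub] at h
  · intro x y z hxy
    apply (hr _ _).mpr
    have heq : y + z - (x + z) = y - x := by module
    rw [heq]
    exact (hr x y).mp hxy
  · intro x y l hl hxy
    apply (hr _ _).mpr
    rw [← smul_sub]
    exact hsmulC l hl _ ((hr x y).mp hxy)
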